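/- Let n = 2k and f : F_{2^n} → F_2 with f(x) = Tr^n_1(α x^{2^i}(x + x^{2^k})) for α ∈ F_{2^n} \ F_{2^k} and 0 ≤ i < n. Then f is bent. -/

import Mathlib

set_option linter.unusedSectionVars false

open Finset

def chr (b : ZMod 2) : ℤ := if b = 0 then 1 else -1

variable {K : Type*} [Field K] [Fintype K] [Algebra (ZMod 2) K]

/-- The absolute trace `Tr^n_1 : F_{2^n} → F_2`. -/
noncomputable def tr (x : K) : ZMod 2 := Algebra.trace (ZMod 2) K x

/-- The Walsh transform of a Boolean function `f` on `K = F_{2^n}`. -/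
noncomputable def walshF (f : K → ZMod 2) (l : K) : ℤ :=
  ∑ x, chr (f x + tr (l * x))

/-- `f` is bent on `K = F_{2^{2k}}`: all Walsh values are `±2^k`. -/
def IsBentF (k : ℕ) (f : K → ZMod 2) : Prop :=
  ∀ l : K, walshF f l = 2 ^ k ∨ walshF f l = -(2 ^ k)

/-! ### Auxiliary lemmas -/

lemma chr_add' : ∀ a b : ZMod 2, chr (a + b) = chr a * chr b := by decide

lemma chr_add_one' : ∀ a : ZMod 2, chr (a + 1) = - chr a := by decide

lemma charK : CharP K 2 :=
  charP_of_injective_algebraMap (algebraMap (ZMod 2) K).injective 2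

lemma tr_add' (x y : K) : tr (x + y) = tr x + tr y := map_add (Algebra.trace (ZMod 2) K) x y

lemma tr_sq (x : K) : tr (x ^ 2) = tr x := by
  haveI := charK (K := K)
  haveI : ExpChar K 2 := inferInstance
  haveI : PerfectRing K 2 := inferInstance
  let e : K ≃ₐ[ZMod 2] K := AlgEquiv.ofRingEquiv (f := frobeniusEquiv K 2) (fun r => by
    show (algebraMap (ZMod 2) K r) ^ 2 = algebraMap (ZMod 2) K r
    rw [← map_pow]
    congr 1
    revert r; decide)
  have h := Algebra.trace_eq_of_algEquiv e x
  have he : e x = x ^ 2 := rfl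
  rw [he] at h
  exact h

lemma tr_pow2 (m : ℕ) (x : K) : tr (x ^ 2 ^ m) = tr x := by
  induction m with
  | zero => simp
  | succ m ih => rw [pow_succ, pow_mul, tr_sq, ih]

lemma pow_card' {k : ℕ} (hcard : Fintype.card K = 2 ^ (2 * k)) (x : K) :
    x ^ 2 ^ (2 * k) = x := by
  rw [← hcard]; exact FiniteField.pow_card x

lemma tr_shift {k : ℕ} (hcard : Fintype.card K = 2 ^ (2 * k)) {j : ℕ} (hj : j ≤ 2 * k)
    (c x : K) : tr (c * x ^ 2 ^ j) = tr (c ^ 2 ^ (2 * k - j) * x) := by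
  conv_lhs => rw [← tr_pow2 (2 * k - j)]
  rw [mul_pow, ← pow_mul, ← pow_add, Nat.add_sub_cancel' hj, pow_card' hcard]

lemma tr_ex (b : K) (hb : b ≠ 0) : ∃ x : K, tr (b * x) = 1 := by
  haveI : FiniteDimensional (ZMod 2) K := Module.Finite.of_finite
  haveI : Algebra.IsSeparable (ZMod 2) K := inferInstance
  by_contra h
  push_neg at h
  have h' : ∀ x : K, tr (b * x) = 0 := by
    intro x
    have := h x
    revert this
    generalize tr (b * x) = a
    revert a; decide
  exact hb ((traceForm_nondegenerate (ZMod 2) K).1 b h')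

lemma sum_chr_lin (b : K) (hb : b ≠ 0) : ∑ x : K, chr (tr (b * x)) = 0 := by
  obtain ⟨x0, hx0⟩ := tr_ex b hb
  have h1 : ∑ x : K, chr (tr (b * (x + x0))) = ∑ x : K, chr (tr (b * x)) :=
    Fintype.sum_equiv (Equiv.addRight x0) _ _ (fun x => rfl)
  have h2 : ∑ x : K, chr (tr (b * (x + x0))) = - ∑ x : K, chr (tr (b * x)) := by
    rw [← Finset.sum_neg_distrib]
    exact Finset.sum_congr rfl fun x _ => by rw [mul_add, tr_add', hx0, chr_add_one']
  omega

lemma bNonzero {k i : ℕ} (hi : i < 2 * k) (hcard : Fintype.card K = 2 ^ (2 * k))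
    (α : K) (hα : α ^ 2 ^ k ≠ α) (u : K) (hu : u ≠ 0) :
    (α * (u + u ^ 2 ^ k)) ^ 2 ^ (2 * k - i) + α * u ^ 2 ^ i + (α * u ^ 2 ^ i) ^ 2 ^ k ≠ 0 := by
  haveI := charK (K := K)
  intro h0
  set s : K := u + u ^ 2 ^ k with hs_def
  set w : K := α * u ^ 2 ^ i with hw_def
  have hkk : (2:ℕ) ^ k * 2 ^ k = 2 ^ (2 * k) := by rw [← pow_add, two_mul]
  have hupc : (u ^ 2 ^ k) ^ 2 ^ k = u := by rw [← pow_mul, hkk, pow_card' hcard]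
  have hsq : s ^ 2 ^ k = s := by
    rw [hs_def, add_pow_char_pow, hupc, add_comm]
  by_cases hs : s = 0
  · -- u is in the subfield, α must be too: contradiction
    have h1 : u ^ 2 ^ k = u := by
      have := eq_neg_of_add_eq_zero_right hs
      rwa [CharTwo.neg_eq] at this
    have hw1 : w ^ 2 ^ k = α ^ 2 ^ k * u ^ 2 ^ i := by
      rw [hw_def, mul_pow, ← pow_mul, mul_comm (2 ^ i) (2 ^ k), pow_mul, h1]
    have hz : (α * s) ^ 2 ^ (2 * k - i) = 0 := by
      rw [hs, mul_zero, zero_pow (by positivity)]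
    rw [hz, zero_add, hw1] at h0
    have h2 : w = α ^ 2 ^ k * u ^ 2 ^ i := by
      have := eq_neg_of_add_eq_zero_left h0
      rwa [CharTwo.neg_eq] at this
    exact hα (mul_right_cancel₀ (pow_ne_zero _ hu) (h2.symm.trans hw_def))
  · -- s ≠ 0 : then α = t/s with t, s in the subfield
    have hii : i ≤ 2 * k := le_of_lt hi
    have hexp : (2:ℕ) ^ (2 * k - i) * 2 ^ i = 2 ^ (2 * k) := by
      rw [← pow_add, Nat.sub_add_cancel hii]
    rw [add_assoc] at h0
    have h0' : (α * s) ^ 2 ^ (2 * k - i) = w + w ^ 2 ^ k := by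
      have := eq_neg_of_add_eq_zero_left h0
      rwa [CharTwo.neg_eq] at this
    have hαs : α * s = (w + w ^ 2 ^ k) ^ 2 ^ i := by
      rw [← h0', ← pow_mul, hexp, pow_card' hcard]
    set t : K := (w + w ^ 2 ^ k) ^ 2 ^ i with ht_def
    have hwq : (w + w ^ 2 ^ k) ^ 2 ^ k = w + w ^ 2 ^ k := by
      rw [add_pow_char_pow, ← pow_mul, hkk, pow_card' hcard, add_comm]
    have htq : t ^ 2 ^ k = t := by
      rw [ht_def, ← pow_mul, mul_comm ((2:ℕ) ^ i) (2 ^ k), pow_mul, hwq]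
    have hαt : α = t * s⁻¹ := eq_mul_inv_iff_mul_eq₀ hs |>.mpr hαs
    have : α ^ 2 ^ k = α := by
      rw [hαt, mul_pow, inv_pow, hsq, htq]
    exact hα this

lemma chr_zero' : chr 0 = 1 := rfl

/-- Generic bentness criterion: if all derivatives are affine with nonvanishing linear part. -/
lemma bent_of_deriv {k : ℕ} (hcard : Fintype.card K = 2 ^ (2 * k)) (f : K → ZMod 2) (b : K → K)
    (hD : ∀ u x : K, f (x + u) = f x + (tr (b u * x) + f u))
    (hbne : ∀ u : K, u ≠ 0 → b u ≠ 0) (hf0 : f 0 = 0) :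
    IsBentF k f := by
  classical
  intro β
  have key : walshF f β * walshF f β = 2 ^ (2 * k) := by
    rw [walshF, Finset.sum_mul_sum]
    have swap : ∀ x : K, ∑ y : K, chr (f x + tr (β * x)) * chr (f y + tr (β * y))
        = ∑ u : K, chr (f x + tr (β * x)) * chr (f (x + u) + tr (β * (x + u))) := fun x =>
      (Fintype.sum_equiv (Equiv.addLeft x) _ _ (fun u => rfl)).symm
    rw [Finset.sum_congr rfl (fun x _ => swap x), Finset.sum_comm]
    have inner : ∀ u : K, ∑ x : K, chr (f x + tr (β * x)) * chr (f (x + u) + tr (β * (x + u)))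
        = if u = 0 then (2:ℤ) ^ (2 * k) else 0 := by
      intro u
      have harg : ∀ x : K, chr (f x + tr (β * x)) * chr (f (x + u) + tr (β * (x + u)))
          = chr (tr (b u * x)) * chr (f u + tr (β * u)) := by
        intro x
        rw [← chr_add', ← chr_add', hD u x, mul_add, tr_add']
        congr 1
        generalize f x = a
        generalize tr (β * x) = c
        generalize tr (b u * x) = d
        generalize f u = e'
        generalize tr (β * u) = g
        revert a c d e' g; decide
      rw [Finset.sum_congr rfl (fun x _ => harg x), ← Finset.sum_mul]
      by_cases hu : u = 0
      · subst hu
        have htr0 : ∀ x : K, tr (b 0 * x) = 0 := by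
          intro x
          have h := hD 0 x
          rw [add_zero, hf0, add_zero] at h
          exact (left_eq_add.mp h)
        have hc : f 0 + tr (β * 0) = 0 := by
          rw [hf0, mul_zero, zero_add]
          exact map_zero (Algebra.trace (ZMod 2) K)
        rw [if_pos rfl, hc]
        simp only [htr0, chr_zero', Finset.sum_const, Finset.card_univ, hcard, nsmul_eq_mul,
          mul_one, Nat.cast_pow, Nat.cast_ofNat]
      · rw [sum_chr_lin (b u) (hbne u hu), zero_mul, if_neg hu]
    rw [Finset.sum_congr rfl (fun u _ => inner u), Finset.sum_ite_eq' Finset.univ (0:K)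
      (fun _ => (2:ℤ) ^ (2 * k)), if_pos (Finset.mem_univ _)]
  have h2k : (2:ℤ) ^ (2 * k) = 2 ^ k * 2 ^ k := by rw [two_mul, pow_add]
  rw [h2k] at key
  exact mul_self_eq_mul_self_iff.mp key

theorem stmt16 (k i : ℕ) (hk : 0 < k) (hi : i < 2 * k)
    (hcard : Fintype.card K = 2 ^ (2 * k))
    (α : K) (hα : α ^ (2 ^ k) ≠ α) :
    IsBentF k (fun x => tr (α * (x ^ (2 ^ i) * (x + x ^ (2 ^ k))))) := by
  haveI := charK (K := K)
  have hki : k ≤ 2 * k := by omega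
  have hkk' : 2 * k - k = k := by omega
  apply bent_of_deriv hcard _
    (fun u => (α * (u + u ^ 2 ^ k)) ^ 2 ^ (2 * k - i) + α * u ^ 2 ^ i + (α * u ^ 2 ^ i) ^ 2 ^ k)
  · intro u x
    show tr (α * ((x + u) ^ 2 ^ i * ((x + u) + (x + u) ^ 2 ^ k)))
        = tr (α * (x ^ 2 ^ i * (x + x ^ 2 ^ k)))
          + (tr (((α * (u + u ^ 2 ^ k)) ^ 2 ^ (2 * k - i) + α * u ^ 2 ^ i
              + (α * u ^ 2 ^ i) ^ 2 ^ k) * x)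
            + tr (α * (u ^ 2 ^ i * (u + u ^ 2 ^ k))))
    have harg : α * ((x + u) ^ 2 ^ i * ((x + u) + (x + u) ^ 2 ^ k))
        = α * (x ^ 2 ^ i * (x + x ^ 2 ^ k))
          + (α * (u + u ^ 2 ^ k) * x ^ 2 ^ i
          + (α * u ^ 2 ^ i * x
          + (α * u ^ 2 ^ i * x ^ 2 ^ k
          + α * (u ^ 2 ^ i * (u + u ^ 2 ^ k))))) := by
      rw [add_pow_char_pow, add_pow_char_pow]
      ring
    have hsplit : tr (((α * (u + u ^ 2 ^ k)) ^ 2 ^ (2 * k - i) + α * u ^ 2 ^ i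
            + (α * u ^ 2 ^ i) ^ 2 ^ k) * x)
        = tr ((α * (u + u ^ 2 ^ k)) ^ 2 ^ (2 * k - i) * x)
          + (tr (α * u ^ 2 ^ i * x) + tr ((α * u ^ 2 ^ i) ^ 2 ^ k * x)) := by
      rw [add_mul, add_mul, tr_add', tr_add']
      ring
    rw [harg, tr_add', tr_add', tr_add', tr_add',
      tr_shift hcard (le_of_lt hi) (α * (u + u ^ 2 ^ k)) x,
      tr_shift hcard hki (α * u ^ 2 ^ i) x, hkk', hsplit]
    ring
  · exact fun u hu => bNonzero hi hcard α hα u hu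
  · show tr (α * ((0:K) ^ 2 ^ i * (0 + 0 ^ 2 ^ k))) = 0
    have h1 : (0:K) ^ 2 ^ i = 0 := zero_pow (by positivity)
    rw [h1, zero_mul, mul_zero]
    exact map_zero (Algebra.trace (ZMod 2) K)
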